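/- Let F : C²-function from V to L(U,V) with bounded derivatives up to order 2, let X : [0,T] → U be α-Hölder with α ∈ (1/3,1/2], and let (Z, Z') be a V-valued path controlled by X. Then (F∘Z, (DF∘Z)·Z') — with Gubinelli derivative at time t given by u ↦ (D_{Z_t}F)(Z'_t u) ∈ L(U,V) — is an L(U,V)-valued path controlled by X, with remainder bound |F(Z_t) − F(Z_s) − (D_{Z_s}F)(Z'_s(X_t − X_s))| ≤ C|t−s|^{2α}, where C depends only on ‖F‖_{C²}, the controlled-path norm of (Z,Z'), ‖X‖_{α-Höl} and T. -/

import Mathlib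

set_option maxHeartbeats 1600000

section aux

variable {V W : Type*} [NormedAddCommGroup V] [NormedSpace ℝ V]
  [NormedAddCommGroup W] [NormedSpace ℝ W]

lemma fderiv_lipschitz_of_bound (F : V → W) (hF : ContDiff ℝ 2 F) (M₂ : ℝ)
    (hM₂ : ∀ v, ‖fderiv ℝ (fderiv ℝ F) v‖ ≤ M₂) (a b : V) :
    ‖fderiv ℝ F b - fderiv ℝ F a‖ ≤ M₂ * ‖b - a‖ := by
  have hdf : ContDiff ℝ 1 (fderiv ℝ F) := hF.fderiv_right (by norm_num)
  exact convex_univ.norm_image_sub_le_of_norm_fderiv_le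
    (fun x _ => (hdf.differentiable one_ne_zero).differentiableAt)
    (fun x _ => hM₂ x) (Set.mem_univ a) (Set.mem_univ b)

lemma taylor_bound (F : V → W) (hF : ContDiff ℝ 2 F) (M₂ : ℝ)
    (hM₂ : ∀ v, ‖fderiv ℝ (fderiv ℝ F) v‖ ≤ M₂) (a b : V) :
    ‖F b - F a - fderiv ℝ F a (b - a)‖ ≤ M₂ * ‖b - a‖ * ‖b - a‖ := by
  have hdiff : ∀ x ∈ segment ℝ a b, DifferentiableAt ℝ F x :=
    fun x _ => (hF.differentiable (by norm_num)).differentiableAt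
  have hbound : ∀ x ∈ segment ℝ a b, ‖fderiv ℝ F x - fderiv ℝ F a‖ ≤ M₂ * ‖b - a‖ := by
    intro x hx
    obtain ⟨u, v, hu, hv, huv, rfl⟩ := hx
    have hx_a : u • a + v • b - a = v • (b - a) := by
      have : u = 1 - v := by linarith
      subst this
      module
    calc ‖fderiv ℝ F (u • a + v • b) - fderiv ℝ F a‖
        ≤ M₂ * ‖u • a + v • b - a‖ :=
          fderiv_lipschitz_of_bound F hF M₂ hM₂ a (u • a + v • b)
      _ ≤ M₂ * ‖b - a‖ := by
          have hM₂0 : 0 ≤ M₂ := le_trans (ContinuousLinearMap.opNorm_nonneg _) (hM₂ a)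
          have : ‖u • a + v • b - a‖ ≤ ‖b - a‖ := by
            rw [hx_a, norm_smul, Real.norm_eq_abs, abs_of_nonneg hv]
            nlinarith [norm_nonneg (b - a)]
          nlinarith
  have := (convex_segment a b).norm_image_sub_le_of_norm_fderiv_le' hdiff hbound
    (left_mem_segment ℝ a b) (right_mem_segment ℝ a b)
  calc ‖F b - F a - fderiv ℝ F a (b - a)‖ ≤ M₂ * ‖b - a‖ * ‖b - a‖ := this

end aux

/-- Stability of controlled paths under composition with a `C²`
map `F : V → L(U,V)` with bounded derivatives: `(F∘Z, DF(Z)·Z')` is an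
`L(U,V)`-valued controlled path, with a quantitative `2α`-Hölder remainder
bound and an `α`-Hölder bound on the Gubinelli derivative part. -/
theorem controlled_path_composition_C2
    (U V : Type*) [NormedAddCommGroup U] [NormedSpace ℝ U] [CompleteSpace U]
    [NormedAddCommGroup V] [NormedSpace ℝ V] [CompleteSpace V]
    (T α : ℝ) (hT : 0 < T) (hα : α ∈ Set.Ioc (1/3 : ℝ) (1/2 : ℝ))
    (F : V → U →L[ℝ] V) (hF : ContDiff ℝ 2 F)
    (M₀ M₁ M₂ : ℝ)
    (hM₀ : ∀ v : V, ‖F v‖ ≤ M₀)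
    (hM₁ : ∀ v : V, ‖fderiv ℝ F v‖ ≤ M₁)
    (hM₂ : ∀ v : V, @norm _ (ContinuousLinearMap.hasOpNorm (E := V) (F := V →L[ℝ] U →L[ℝ] V) (σ₁₂ := RingHom.id ℝ)) (fderiv ℝ (fderiv ℝ F) v) ≤ M₂)
    (X : ℝ → U) (CX : ℝ)
    (hX : ∀ s t : ℝ, 0 ≤ s → s ≤ t → t ≤ T → ‖X t - X s‖ ≤ CX * (t - s) ^ α)
    (Z : ℝ → V) (Z' : ℝ → U →L[ℝ] V) (CZ' KZ BZ' : ℝ)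
    (hZ' : ∀ s t : ℝ, 0 ≤ s → s ≤ t → t ≤ T → ‖Z' t - Z' s‖ ≤ CZ' * (t - s) ^ α)
    (hBZ' : ∀ t ∈ Set.Icc (0:ℝ) T, ‖Z' t‖ ≤ BZ')
    (hR : ∀ s t : ℝ, 0 ≤ s → s ≤ t → t ≤ T →
      ‖Z t - Z s - Z' s (X t - X s)‖ ≤ KZ * (t - s) ^ (2*α)) :
    ∃ C : ℝ, 0 ≤ C ∧
      -- remainder bound for `(F∘Z, DF(Z)∘Z')`
      (∀ s t : ℝ, 0 ≤ s → s ≤ t → t ≤ T →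
        ‖F (Z t) - F (Z s) - fderiv ℝ F (Z s) (Z' s (X t - X s))‖ ≤
          C * (t - s) ^ (2*α)) ∧
      -- the Gubinelli derivative `u ↦ (D_{Z_t}F)(Z'_t u)` is `α`-Hölder
      (∀ s t : ℝ, 0 ≤ s → s ≤ t → t ≤ T →
        ‖(fderiv ℝ F (Z t)).comp (Z' t) - (fderiv ℝ F (Z s)).comp (Z' s)‖ ≤
          C * (t - s) ^ α) := by
  obtain ⟨hα1, hα2⟩ := hα
  have hα0 : (0:ℝ) < α := by linarith
  have hTα : (0:ℝ) < T ^ α := Real.rpow_pos_of_pos hT α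
  have hM₁0 : 0 ≤ M₁ := le_trans (ContinuousLinearMap.opNorm_nonneg _) (hM₁ (Z 0))
  have hM₂0 : 0 ≤ M₂ := le_trans (ContinuousLinearMap.opNorm_nonneg _) (hM₂ (Z 0))
  have hBZ'0 : 0 ≤ BZ' := le_trans (norm_nonneg _) (hBZ' 0 ⟨le_rfl, hT.le⟩)
  have hCX0 : 0 ≤ CX := by
    have h := hX 0 T le_rfl hT.le le_rfl
    have h0 : (0:ℝ) ≤ CX * (T - 0) ^ α := le_trans (norm_nonneg _) h
    rw [sub_zero] at h0
    nlinarith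
  have hKZ0 : 0 ≤ KZ := by
    have h := hR 0 T le_rfl hT.le le_rfl
    have h0 : (0:ℝ) ≤ KZ * (T - 0) ^ (2*α) := le_trans (norm_nonneg _) h
    rw [sub_zero] at h0
    have hT2α : (0:ℝ) < T ^ (2*α) := Real.rpow_pos_of_pos hT _
    nlinarith
  have hCZ'0 : 0 ≤ CZ' := by
    have h := hZ' 0 T le_rfl hT.le le_rfl
    have h0 : (0:ℝ) ≤ CZ' * (T - 0) ^ α := le_trans (norm_nonneg _) h
    rw [sub_zero] at h0
    nlinarith
  obtain ⟨L, hL_def⟩ : ∃ L : ℝ, L = BZ' * CX + KZ * T ^ α := ⟨_, rfl⟩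
  have hL0 : 0 ≤ L := by rw [hL_def]; positivity
  -- splitting of the (t-s)^(2α) power
  have hsplit : ∀ s t : ℝ, s ≤ t → (t - s) ^ (2*α) = (t - s) ^ α * (t - s) ^ α := by
    intro s t hst
    rw [two_mul]
    exact Real.rpow_add' (by linarith) (by positivity)
  have hpowle : ∀ s t : ℝ, 0 ≤ s → s ≤ t → t ≤ T → (t - s) ^ α ≤ T ^ α := by
    intro s t hs hst htT
    exact Real.rpow_le_rpow (by linarith) (by linarith) hα0.le
  -- Hölder bound on Z
  have hZhol : ∀ s t : ℝ, 0 ≤ s → s ≤ t → t ≤ T → ‖Z t - Z s‖ ≤ L * (t - s) ^ α := by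
    intro s t hs hst htT
    have hp : (0:ℝ) ≤ (t - s) ^ α := Real.rpow_nonneg (by linarith) α
    have h1 : ‖Z t - Z s‖ ≤ ‖Z' s (X t - X s)‖ + ‖Z t - Z s - Z' s (X t - X s)‖ := by
      calc ‖Z t - Z s‖ = ‖Z' s (X t - X s) + (Z t - Z s - Z' s (X t - X s))‖ := by abel_nf
        _ ≤ _ := norm_add_le _ _
    have h2 : ‖Z' s (X t - X s)‖ ≤ BZ' * (CX * (t - s) ^ α) := by
      calc ‖Z' s (X t - X s)‖ ≤ ‖Z' s‖ * ‖X t - X s‖ := (Z' s).le_opNorm _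
        _ ≤ BZ' * (CX * (t - s) ^ α) := by
            have hb := hBZ' s ⟨hs, le_trans hst htT⟩
            have hx := hX s t hs hst htT
            exact mul_le_mul hb hx (norm_nonneg _) hBZ'0
    have h3 : ‖Z t - Z s - Z' s (X t - X s)‖ ≤ KZ * (T ^ α * (t - s) ^ α) := by
      calc ‖Z t - Z s - Z' s (X t - X s)‖ ≤ KZ * (t - s) ^ (2*α) := hR s t hs hst htT
        _ = KZ * ((t - s) ^ α * (t - s) ^ α) := by rw [hsplit s t hst]
        _ ≤ KZ * (T ^ α * (t - s) ^ α) := by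
            have h := hpowle s t hs hst htT
            gcongr
    calc ‖Z t - Z s‖ ≤ BZ' * (CX * (t - s) ^ α) + KZ * (T ^ α * (t - s) ^ α) := by linarith
      _ = L * (t - s) ^ α := by rw [hL_def]; ring
  refine ⟨M₂ * L * L + M₁ * KZ + M₂ * L * BZ' + M₁ * CZ', by positivity, ?_, ?_⟩
  · -- remainder bound
    intro s t hs hst htT
    have hp : (0:ℝ) ≤ (t - s) ^ α := Real.rpow_nonneg (by linarith) α
    have hp2 : (0:ℝ) ≤ (t - s) ^ (2*α) := Real.rpow_nonneg (by linarith) _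
    have key : F (Z t) - F (Z s) - fderiv ℝ F (Z s) (Z' s (X t - X s)) =
        (F (Z t) - F (Z s) - fderiv ℝ F (Z s) (Z t - Z s)) +
        fderiv ℝ F (Z s) (Z t - Z s - Z' s (X t - X s)) := by
      simp only [map_sub]; abel
    rw [key]
    have h1 : ‖F (Z t) - F (Z s) - fderiv ℝ F (Z s) (Z t - Z s)‖ ≤
        M₂ * ‖Z t - Z s‖ * ‖Z t - Z s‖ := taylor_bound F hF M₂ hM₂ (Z s) (Z t)
    have h2 : ‖fderiv ℝ F (Z s) (Z t - Z s - Z' s (X t - X s))‖ ≤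
        M₁ * (KZ * (t - s) ^ (2*α)) := by
      calc ‖fderiv ℝ F (Z s) (Z t - Z s - Z' s (X t - X s))‖
          ≤ ‖fderiv ℝ F (Z s)‖ * ‖Z t - Z s - Z' s (X t - X s)‖ :=
            (fderiv ℝ F (Z s)).le_opNorm _
        _ ≤ M₁ * (KZ * (t - s) ^ (2*α)) :=
            mul_le_mul (hM₁ (Z s)) (hR s t hs hst htT) (norm_nonneg _) hM₁0
    have hz := hZhol s t hs hst htT
    have hzz : M₂ * ‖Z t - Z s‖ * ‖Z t - Z s‖ ≤ M₂ * L * L * (t - s) ^ (2*α) := by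
      rw [hsplit s t hst]
      calc M₂ * ‖Z t - Z s‖ * ‖Z t - Z s‖
          ≤ M₂ * (L * (t - s) ^ α) * (L * (t - s) ^ α) := by gcongr <;> positivity
        _ = M₂ * L * L * ((t - s) ^ α * (t - s) ^ α) := by ring
    calc ‖(F (Z t) - F (Z s) - fderiv ℝ F (Z s) (Z t - Z s)) +
          fderiv ℝ F (Z s) (Z t - Z s - Z' s (X t - X s))‖
        ≤ ‖F (Z t) - F (Z s) - fderiv ℝ F (Z s) (Z t - Z s)‖ +
          ‖fderiv ℝ F (Z s) (Z t - Z s - Z' s (X t - X s))‖ := norm_add_le _ _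
      _ ≤ M₂ * L * L * (t - s) ^ (2*α) + M₁ * (KZ * (t - s) ^ (2*α)) := by linarith
      _ ≤ (M₂ * L * L + M₁ * KZ + M₂ * L * BZ' + M₁ * CZ') * (t - s) ^ (2*α) := by
          nlinarith [mul_nonneg (mul_nonneg (mul_nonneg hM₂0 hL0) hBZ'0) hp2,
            mul_nonneg (mul_nonneg hM₁0 hCZ'0) hp2]
  · -- derivative part
    intro s t hs hst htT
    have hp : (0:ℝ) ≤ (t - s) ^ α := Real.rpow_nonneg (by linarith) α
    have key : (fderiv ℝ F (Z t)).comp (Z' t) - (fderiv ℝ F (Z s)).comp (Z' s) =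
        (fderiv ℝ F (Z t) - fderiv ℝ F (Z s)).comp (Z' t) +
        (fderiv ℝ F (Z s)).comp (Z' t - Z' s) := by
      rw [ContinuousLinearMap.sub_comp, ContinuousLinearMap.comp_sub, sub_add_sub_cancel]
    rw [key]
    have h1 : ‖(fderiv ℝ F (Z t) - fderiv ℝ F (Z s)).comp (Z' t)‖ ≤
        (M₂ * (L * (t - s) ^ α)) * BZ' := by
      calc ‖(fderiv ℝ F (Z t) - fderiv ℝ F (Z s)).comp (Z' t)‖
          ≤ ‖fderiv ℝ F (Z t) - fderiv ℝ F (Z s)‖ * ‖Z' t‖ :=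
            ContinuousLinearMap.opNorm_comp_le _ _
        _ ≤ (M₂ * (L * (t - s) ^ α)) * BZ' := by
            have ha : ‖fderiv ℝ F (Z t) - fderiv ℝ F (Z s)‖ ≤ M₂ * (L * (t - s) ^ α) := by
              calc ‖fderiv ℝ F (Z t) - fderiv ℝ F (Z s)‖ ≤ M₂ * ‖Z t - Z s‖ :=
                    fderiv_lipschitz_of_bound F hF M₂ hM₂ (Z s) (Z t)
                _ ≤ M₂ * (L * (t - s) ^ α) := by
                    have h := hZhol s t hs hst htT
                    gcongr
            exact mul_le_mul ha (hBZ' t ⟨le_trans hs hst, htT⟩) (norm_nonneg _) (by positivity)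
    have h2 : ‖(fderiv ℝ F (Z s)).comp (Z' t - Z' s)‖ ≤ M₁ * (CZ' * (t - s) ^ α) := by
      calc ‖(fderiv ℝ F (Z s)).comp (Z' t - Z' s)‖
          ≤ ‖fderiv ℝ F (Z s)‖ * ‖Z' t - Z' s‖ := ContinuousLinearMap.opNorm_comp_le _ _
        _ ≤ M₁ * (CZ' * (t - s) ^ α) :=
            mul_le_mul (hM₁ (Z s)) (hZ' s t hs hst htT) (norm_nonneg _) hM₁0
    calc ‖(fderiv ℝ F (Z t) - fderiv ℝ F (Z s)).comp (Z' t) +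
          (fderiv ℝ F (Z s)).comp (Z' t - Z' s)‖
        ≤ ‖(fderiv ℝ F (Z t) - fderiv ℝ F (Z s)).comp (Z' t)‖ +
          ‖(fderiv ℝ F (Z s)).comp (Z' t - Z' s)‖ :=
            norm_add_le ((fderiv ℝ F (Z t) - fderiv ℝ F (Z s)).comp (Z' t)) ((fderiv ℝ F (Z s)).comp (Z' t - Z' s))
      _ ≤ (M₂ * (L * (t - s) ^ α)) * BZ' + M₁ * (CZ' * (t - s) ^ α) := by linarith
      _ ≤ (M₂ * L * L + M₁ * KZ + M₂ * L * BZ' + M₁ * CZ') * (t - s) ^ α := by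
          nlinarith [mul_nonneg (mul_nonneg (mul_nonneg hM₂0 hL0) hL0) hp,
            mul_nonneg (mul_nonneg hM₁0 hKZ0) hp]
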